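/- If G is a right-orderable group and R is a ring with no zero divisors, then every unit of the group ring R[G] is of the form r·g where r is a unit of R and g ∈ G. -/

import Mathlib

/-- A group is right-orderable if it admits a strict total order invariant
under right multiplication. -/
def RightOrderable (G : Type*) [Group G] : Prop :=
  ∃ r : G → G → Prop, IsStrictTotalOrder G r ∧ ∀ g h k : G, r g h → r (g * k) (h * k)

theorem groupRing_units_are_monomials (R : Type*) [Ring R] [NoZeroDivisors R]
    (G : Type*) [Group G] (hG : RightOrderable G) :
    ∀ u : (MonoidAlgebra R G)ˣ, ∃ r : Rˣ, ∃ g : G,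
      (u : MonoidAlgebra R G) = MonoidAlgebra.single g (r : R) := by
  classical
  -- Trivial ring case
  rcases subsingleton_or_nontrivial R with hR | hR
  · intro u
    refine ⟨1, 1, ?_⟩
    apply Subsingleton.elim (α := MonoidAlgebra R G)
  -- Install a linear order on G making it right strict mono
  obtain ⟨r, hsto, hmul⟩ := hG
  letI : LinearOrder G := linearOrderOfSTO r
  haveI : MulRightStrictMono G :=
    ⟨fun k a b hab => hmul a b k hab⟩
  haveI : TwoUniqueProds G := TwoUniqueProds.of_covariant_left
  intro u
  set f : MonoidAlgebra R G := (u : MonoidAlgebra R G) with hf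
  set g : MonoidAlgebra R G := ((u⁻¹ : (MonoidAlgebra R G)ˣ) : MonoidAlgebra R G) with hg
  have hfg : f * g = 1 := u.mul_inv
  have hgf : g * f = 1 := u.inv_mul
  have hone : (1 : MonoidAlgebra R G).coeff.support = {(1 : G)} := by
    rw [MonoidAlgebra.one_def]
    exact Finsupp.support_single_ne_zero _ one_ne_zero
  have hfne : f ≠ 0 := by
    intro h
    rw [h, zero_mul] at hfg
    exact zero_ne_one hfg
  have hgne : g ≠ 0 := by
    intro h
    rw [h, mul_zero] at hfg
    exact zero_ne_one hfg
  -- cards are 1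
  have hcard : ¬ 1 < f.coeff.support.card * g.coeff.support.card := by
    intro hlt
    obtain ⟨p1, hp1, p2, hp2, hne, hu1, hu2⟩ := TwoUniqueProds.uniqueMul_of_one_lt_card hlt
    have h1 : (f * g).coeff (p1.1 * p1.2) = f.coeff p1.1 * g.coeff p1.2 :=
      MonoidAlgebra.coeff_mul_mul_of_uniqueMul hu1
    have h2 : (f * g).coeff (p2.1 * p2.2) = f.coeff p2.1 * g.coeff p2.2 :=
      MonoidAlgebra.coeff_mul_mul_of_uniqueMul hu2
    rw [Finset.mem_product] at hp1 hp2
    have hne1 : f.coeff p1.1 * g.coeff p1.2 ≠ 0 :=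
      mul_ne_zero (Finsupp.mem_support_iff.mp hp1.1) (Finsupp.mem_support_iff.mp hp1.2)
    have hne2 : f.coeff p2.1 * g.coeff p2.2 ≠ 0 :=
      mul_ne_zero (Finsupp.mem_support_iff.mp hp2.1) (Finsupp.mem_support_iff.mp hp2.2)
    have hm1 : p1.1 * p1.2 ∈ (f * g).coeff.support := Finsupp.mem_support_iff.mpr (h1 ▸ hne1)
    have hm2 : p2.1 * p2.2 ∈ (f * g).coeff.support := Finsupp.mem_support_iff.mpr (h2 ▸ hne2)
    rw [hfg, hone, Finset.mem_singleton] at hm1 hm2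
    have : p1.1 * p1.2 = p2.1 * p2.2 := hm1.trans hm2.symm
    obtain ⟨ha, hb⟩ := hu1 hp2.1 hp2.2 this.symm
    exact hne (Prod.ext ha.symm hb.symm)
  have hf1 : 1 ≤ f.coeff.support.card := Finset.card_pos.mpr (Finsupp.support_nonempty_iff.mpr (mt MonoidAlgebra.coeff_eq_zero.mp hfne))
  have hg1 : 1 ≤ g.coeff.support.card := Finset.card_pos.mpr (Finsupp.support_nonempty_iff.mpr (mt MonoidAlgebra.coeff_eq_zero.mp hgne))
  have hmul1 : f.coeff.support.card * g.coeff.support.card = 1 :=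
    Nat.le_antisymm (Nat.le_of_not_lt hcard) (Nat.one_le_iff_ne_zero.mpr
      (Nat.mul_ne_zero (by omega) (by omega)))
  have hfc : f.coeff.support.card = 1 :=
    Nat.le_antisymm (hmul1 ▸ Nat.le_mul_of_pos_right _ (by omega)) hf1
  have hgc : g.coeff.support.card = 1 :=
    Nat.le_antisymm (hmul1 ▸ Nat.le_mul_of_pos_left _ (by omega)) hg1
  obtain ⟨a, s, hs, hfa⟩ := Finsupp.card_support_eq_one'.mp hfc
  obtain ⟨b, t, ht, hgb⟩ := Finsupp.card_support_eq_one'.mp hgc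
  have hfa' : f = MonoidAlgebra.single a s := MonoidAlgebra.coeff_injective hfa
  have hgb' : g = MonoidAlgebra.single b t := MonoidAlgebra.coeff_injective hgb
  have hst : MonoidAlgebra.single (a * b) (s * t) = 1 := by
    rw [← MonoidAlgebra.single_mul_single, ← hfa', ← hgb', hfg]
  have hts : MonoidAlgebra.single (b * a) (t * s) = 1 := by
    rw [← MonoidAlgebra.single_mul_single, ← hfa', ← hgb', hgf]
  rw [MonoidAlgebra.one_def] at hst hts
  rw [MonoidAlgebra.single_inj] at hst hts
  have hst' : s * t = 1 := by
    rcases hst with ⟨_, h⟩ | ⟨_, h⟩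
    · exact h
    · exact absurd h.symm zero_ne_one
  have hts' : t * s = 1 := by
    rcases hts with ⟨_, h⟩ | ⟨_, h⟩
    · exact h
    · exact absurd h.symm zero_ne_one
  exact ⟨⟨s, t, hst', hts'⟩, a, hfa'⟩
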